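/- arXiv:1306.5311 — 2 statements merged into one kernel-verified Lean document; each statement's English description precedes it below -/
import Mathlib

section
/- Exact expression for the scaled TLS estimation error: Let X ∈ ℝ^{n×p}, Y ∈ ℝ^n, λ ∈ ℝ, β, β̂ ∈ ℝ^p, and suppose [β̂ᵀ, −1]ᵀ is an eigenvector of [X,Y]ᵀ[X,Y] with eigenvalue λ. Set Δ_n := n^{−1}(XᵀX − λI) and M := [I, β][I, β̂]ᵀ = I + β β̂ᵀ ∈ ℝ^{p×p}, and assume Δ_n and M are invertible. Then √n (β̂ − β) = −Δ_n^{−1} M^{−1} [I, β] ( n^{−1/2} [X,Y]ᵀ[X,Y] ) [βᵀ, −1]ᵀ; moreover, if in addition [I, β] · E([X,Y]ᵀ[X,Y]) · [βᵀ, −1]ᵀ = 0, then √n (β̂ − β) = −Δ_n^{−1} M^{−1} [I, β] ( n^{−1/2} { [X,Y]ᵀ[X,Y] − E([X,Y]ᵀ[X,Y]) } ) [βᵀ, −1]ᵀ. -/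
open Matrix

namespace Stmt11

/-- `appendCol X Y` is the `n × (p+1)` matrix `[X, Y]` obtained by appending the
column `Y` to the matrix `X`. -/
def appendCol {n p : ℕ} (X : Matrix (Fin n) (Fin p) ℝ) (Y : Fin n → ℝ) :
    Matrix (Fin n) (Fin (p + 1)) ℝ :=
  Matrix.of fun i => Fin.snoc (X i) (Y i)

/-- The `p × (p+1)` matrix `[I, b]` appending the column `b` to the identity. -/
def idAppend {p : ℕ} (b : Fin p → ℝ) : Matrix (Fin p) (Fin (p + 1)) ℝ :=
  appendCol (1 : Matrix (Fin p) (Fin p) ℝ) b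

/-- The vector `[βᵀ, −1]ᵀ ∈ ℝ^{p+1}`. -/
def augNegOne {p : ℕ} (β : Fin p → ℝ) : Fin (p + 1) → ℝ := Fin.snoc β (-1)

variable {n p : ℕ}

lemma appendCol_mulVec_snoc (X : Matrix (Fin n) (Fin p) ℝ) (Y : Fin n → ℝ)
    (w : Fin p → ℝ) (c : ℝ) :
    (appendCol X Y).mulVec (Fin.snoc w c) = X.mulVec w + c • Y := by
  ext i
  simp [appendCol, mulVec, dotProduct, Fin.sum_univ_castSucc, mul_comm]

lemma idAppend_mulVec_snoc (b w : Fin p → ℝ) (c : ℝ) :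
    (idAppend b).mulVec (Fin.snoc w c) = w + c • b := by
  simpa [idAppend] using appendCol_mulVec_snoc (1 : Matrix (Fin p) (Fin p) ℝ) b w c

lemma idAppend_mul_transpose (b : Fin p → ℝ) (X : Matrix (Fin n) (Fin p) ℝ) (Y : Fin n → ℝ) :
    idAppend b * (appendCol X Y)ᵀ = Xᵀ + vecMulVec b Y := by
  ext i j
  simp [idAppend, appendCol, mul_apply, Fin.sum_univ_castSucc, vecMulVec, Matrix.one_apply,
    Finset.sum_ite_eq']

lemma vecMulVec_mulVec' (b : Fin p → ℝ) (Y u : Fin n → ℝ) :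
    (vecMulVec b Y).mulVec u = (Y ⬝ᵥ u) • b := by
  ext i
  simp [vecMulVec, mulVec, dotProduct, Finset.mul_sum, mul_comm, mul_assoc, mul_left_comm]

lemma idAppend_mulVec_transpose (b : Fin p → ℝ) (X : Matrix (Fin n) (Fin p) ℝ)
    (Y u : Fin n → ℝ) :
    (idAppend b).mulVec ((appendCol X Y)ᵀ.mulVec u) = Xᵀ.mulVec u + (Y ⬝ᵥ u) • b := by
  rw [mulVec_mulVec, idAppend_mul_transpose, add_mulVec, vecMulVec_mulVec']

lemma key (X : Matrix (Fin n) (Fin p) ℝ) (Y : Fin n → ℝ) (lam : ℝ) (β βh : Fin p → ℝ)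
    (heig : ((appendCol X Y)ᵀ * appendCol X Y).mulVec (augNegOne βh) = lam • augNegOne βh) :
    (idAppend β).mulVec (((appendCol X Y)ᵀ * appendCol X Y).mulVec (augNegOne β)) =
      ((1 + vecMulVec β βh) * (Xᵀ * X - lam • (1 : Matrix (Fin p) (Fin p) ℝ))).mulVec
        (β - βh) := by
  set G := (appendCol X Y)ᵀ * appendCol X Y with hG
  have hv : augNegOne β = augNegOne βh + Fin.snoc (β - βh) (0 : ℝ) := by
    ext j
    refine Fin.lastCases ?_ ?_ j <;> simp [augNegOne]
  -- E1 : Xᵀ(Xβh - Y) = lam • βh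
  have hE1 : Xᵀ.mulVec (X.mulVec βh - Y) = lam • βh := by
    have h := congrArg (fun v => (idAppend (0 : Fin p → ℝ)).mulVec v) heig
    simp only [hG, ← mulVec_mulVec, mulVec_smul] at h
    rw [show (augNegOne βh) = Fin.snoc βh (-1 : ℝ) from rfl, appendCol_mulVec_snoc,
      idAppend_mulVec_transpose, idAppend_mulVec_snoc] at h
    simpa [sub_eq_add_neg] using h
  have hu : Xᵀ.mulVec (X.mulVec βh) = lam • βh + Xᵀ.mulVec Y := by
    rw [mulVec_sub] at hE1
    exact eq_add_of_sub_eq hE1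
  have hsymm : ∀ a w : Fin p → ℝ, a ⬝ᵥ ((Xᵀ * X).mulVec w) = ((Xᵀ * X).mulVec a) ⬝ᵥ w := by
    intro a w
    rw [dotProduct_mulVec, ← mulVec_transpose, transpose_mul, transpose_transpose]
  have hscal : βh ⬝ᵥ ((Xᵀ * X - lam • (1 : Matrix (Fin p) (Fin p) ℝ)).mulVec (β - βh)) =
      Y ⬝ᵥ X.mulVec (β - βh) := by
    rw [sub_mulVec, dotProduct_sub, hsymm, mulVec_mulVec] at *
    rw [hu, add_dotProduct, smul_dotProduct, mulVec_transpose, ← dotProduct_mulVec]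
    simp [smul_mulVec, dotProduct_smul]
  have hGv : G.mulVec (augNegOne β) =
      lam • augNegOne βh + G.mulVec (Fin.snoc (β - βh) (0 : ℝ)) := by
    rw [hv, mulVec_add, heig]
  rw [hGv, mulVec_add, mulVec_smul]
  have hA_vh : (idAppend β).mulVec (augNegOne βh) = βh - β := by
    rw [show (augNegOne βh) = Fin.snoc βh (-1 : ℝ) from rfl, idAppend_mulVec_snoc]
    ext i; simp [sub_eq_add_neg]
  rw [hA_vh]
  have hmid : G.mulVec (Fin.snoc (β - βh) (0 : ℝ)) =
      (appendCol X Y)ᵀ.mulVec (X.mulVec (β - βh)) := by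
    rw [hG, ← mulVec_mulVec, appendCol_mulVec_snoc]
    simp
  rw [hmid, idAppend_mulVec_transpose]
  rw [add_mul, one_mul, add_mulVec]
  have h2 : (vecMulVec β βh * (Xᵀ * X - lam • (1 : Matrix (Fin p) (Fin p) ℝ))).mulVec (β - βh)
      = (βh ⬝ᵥ ((Xᵀ * X - lam • (1 : Matrix (Fin p) (Fin p) ℝ)).mulVec (β - βh))) • β := by
    rw [← mulVec_mulVec, vecMulVec_mulVec']
  rw [h2, hscal, sub_mulVec, ← mulVec_mulVec, smul_mulVec, one_mulVec]
  module


/-- **Exact expression for the scaled TLS estimation error.**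
If `[β̂ᵀ, −1]ᵀ` is an eigenvector of `G := [X,Y]ᵀ[X,Y]` with eigenvalue `λ`, and
`Δ_n := n⁻¹(XᵀX − λI)` and `M := [I,β][I,β̂]ᵀ = I + β β̂ᵀ` are invertible, then
`√n (β̂ − β) = −Δ_n⁻¹ M⁻¹ [I,β] (n^{−1/2} G) [βᵀ, −1]ᵀ`; and moreover, for any
matrix `EG` (the expectation of `G`) satisfying `[I,β]·EG·[βᵀ,−1]ᵀ = 0`,
`√n (β̂ − β) = −Δ_n⁻¹ M⁻¹ [I,β] (n^{−1/2} (G − EG)) [βᵀ, −1]ᵀ`. -/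
theorem tls_error_expression {n p : ℕ}
    (X : Matrix (Fin n) (Fin p) ℝ) (Y : Fin n → ℝ) (lam : ℝ) (β βh : Fin p → ℝ)
    (heig : ((appendCol X Y)ᵀ * appendCol X Y).mulVec (augNegOne βh) = lam • augNegOne βh)
    (hΔ : IsUnit (((n : ℝ)⁻¹ • (Xᵀ * X - lam • (1 : Matrix (Fin p) (Fin p) ℝ))).det))
    (hM : IsUnit ((idAppend β * (idAppend βh)ᵀ).det)) :
    idAppend β * (idAppend βh)ᵀ = 1 + Matrix.vecMulVec β βh ∧
    Real.sqrt n • (βh - β) =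
      -((((n : ℝ)⁻¹ • (Xᵀ * X - lam • (1 : Matrix (Fin p) (Fin p) ℝ)))⁻¹ *
            (idAppend β * (idAppend βh)ᵀ)⁻¹ * idAppend β).mulVec
          ((Real.sqrt n)⁻¹ • (((appendCol X Y)ᵀ * appendCol X Y).mulVec (augNegOne β)))) ∧
    ∀ EG : Matrix (Fin (p + 1)) (Fin (p + 1)) ℝ,
      (idAppend β).mulVec (EG.mulVec (augNegOne β)) = 0 →
      Real.sqrt n • (βh - β) =
        -((((n : ℝ)⁻¹ • (Xᵀ * X - lam • (1 : Matrix (Fin p) (Fin p) ℝ)))⁻¹ *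
              (idAppend β * (idAppend βh)ᵀ)⁻¹ * idAppend β).mulVec
            ((Real.sqrt n)⁻¹ •
              ((((appendCol X Y)ᵀ * appendCol X Y) - EG).mulVec (augNegOne β)))) := by
  have hMeq : idAppend β * (idAppend βh)ᵀ = 1 + vecMulVec β βh := by
    have h := idAppend_mul_transpose β (1 : Matrix (Fin p) (Fin p) ℝ) βh
    simpa [idAppend] using h
  set G := (appendCol X Y)ᵀ * appendCol X Y with hG
  set Δ := (n : ℝ)⁻¹ • (Xᵀ * X - lam • (1 : Matrix (Fin p) (Fin p) ℝ)) with hΔdef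
  set Mm := idAppend β * (idAppend βh)ᵀ with hMm
  have hmain : Real.sqrt n • (βh - β) =
      -((Δ⁻¹ * Mm⁻¹ * idAppend β).mulVec
        ((Real.sqrt n)⁻¹ • (G.mulVec (augNegOne β)))) := by
    rcases Nat.eq_zero_or_pos n with hn0 | hnpos
    · rcases Nat.eq_zero_or_pos p with hp0 | hp
      · subst hp0; exact Subsingleton.elim _ _
      · exfalso
        haveI : Nonempty (Fin p) := ⟨⟨0, hp⟩⟩
        subst hn0
        simp [hΔdef] at hΔ
    · have hn : (n : ℝ) ≠ 0 := Nat.cast_ne_zero.mpr hnpos.ne'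
      have hs : Real.sqrt n ≠ 0 := by
        have : (0:ℝ) < Real.sqrt n := Real.sqrt_pos.mpr (by positivity)
        exact this.ne'
      have hk := key X Y lam β βh heig
      rw [← hMeq, ← hG] at hk
      have hC : (Δ⁻¹ * Mm⁻¹ * idAppend β).mulVec (G.mulVec (augNegOne β)) =
          (n : ℝ) • (β - βh) := by
        rw [← Matrix.mulVec_mulVec, hk, Matrix.mulVec_mulVec]
        have hmat : Δ⁻¹ * Mm⁻¹ * (Mm * (Xᵀ * X - lam • (1 : Matrix (Fin p) (Fin p) ℝ))) =
            (n : ℝ) • (1 : Matrix (Fin p) (Fin p) ℝ) := by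
          rw [Matrix.mul_assoc (Δ⁻¹), ← Matrix.mul_assoc (Mm⁻¹), Matrix.nonsing_inv_mul _ hM,
            Matrix.one_mul]
          have hΔ0 : (Xᵀ * X - lam • (1 : Matrix (Fin p) (Fin p) ℝ)) = (n : ℝ) • Δ := by
            rw [hΔdef, smul_smul, mul_inv_cancel₀ hn, one_smul]
          rw [hΔ0, Matrix.mul_smul, Matrix.nonsing_inv_mul _ hΔ]
        rw [hmat, Matrix.smul_mulVec, Matrix.one_mulVec]
      have hsc : (Real.sqrt n)⁻¹ * (n : ℝ) = Real.sqrt n := by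
        have h2 : Real.sqrt n * Real.sqrt n = (n : ℝ) := Real.mul_self_sqrt (Nat.cast_nonneg n)
        field_simp
        rw [sq, h2]
      rw [Matrix.mulVec_smul, hC, smul_smul, hsc, ← smul_neg, neg_sub]
  refine ⟨hMeq, hmain, ?_⟩
  intro EG hEG
  have hzero : (Δ⁻¹ * Mm⁻¹ * idAppend β).mulVec (EG.mulVec (augNegOne β)) = 0 := by
    rw [← Matrix.mulVec_mulVec, hEG, Matrix.mulVec_zero]
  rw [Matrix.mulVec_smul] at hmain
  rw [Matrix.sub_mulVec, Matrix.mulVec_smul, Matrix.mulVec_sub, hzero, sub_zero]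
  exact hmain


end Stmt11
end

section
/- Variance of the linearized TLS statistic converges to a positive quadratic form: In the EIV model, for t ∈ ℝ^{p+1}, t ≠ 0, define ρ_i := tᵀ( [Z, Zβ]_{i,·}ᵀ [Θ, ε]_{i,·} + [Θ, ε]_{i,·}ᵀ [Θ, ε]_{i,·} − σ² I_{p+1} ) [βᵀ, −1]ᵀ for i = 1,…,n. Then n^{−1} E( Σ_{i=1}^n ρ_i )² = tᵀ { n^{−1} Var( [X,Y]ᵀ[X,Y] [βᵀ, −1]ᵀ ) } t; in particular, if n^{−1} Var( [X,Y]ᵀ[X,Y] [βᵀ, −1]ᵀ ) → ℶ for a positive definite (p+1)×(p+1) matrix ℶ, then n^{−1} E( Σ_{i=1}^n ρ_i )² → tᵀ ℶ t > 0 as n → ∞. -/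
open Matrix MeasureTheory Filter Topology

namespace Stmt14

variable {Ω : Type*}

/-- The vector `[βᵀ, −1]ᵀ ∈ ℝ^{p+1}`. -/
def augNegOne {p : ℕ} (β : Fin p → ℝ) : Fin (p + 1) → ℝ := Fin.snoc β (-1)

/-- The `i`-th row `[Θ_{i,·}, ε_i]` of the error matrix. -/
def errRow {p : ℕ} (Θ : ℕ → Fin p → Ω → ℝ) (ε : ℕ → Ω → ℝ) (i : ℕ) (ω : Ω) :
    Fin (p + 1) → ℝ :=
  Fin.snoc (fun j => Θ i j ω) (ε i ω)

/-- The `i`-th row `[X_{i,·}, Y_i] = [Z_{i,·} + Θ_{i,·}, Z_{i,·}β + ε_i]` of the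
observed data matrix `[X, Y]`. -/
def dataRow {p : ℕ} (Z : ℕ → Fin p → ℝ) (β : Fin p → ℝ)
    (Θ : ℕ → Fin p → Ω → ℝ) (ε : ℕ → Ω → ℝ) (i : ℕ) (ω : Ω) : Fin (p + 1) → ℝ :=
  Fin.snoc (fun j => Z i j + Θ i j ω) (Z i ⬝ᵥ β + ε i ω)

/-- The `i`-th row `[Z_{i,·}, Z_{i,·}β]` of the design matrix `[Z, Zβ]`. -/
def designRow {p : ℕ} (Z : ℕ → Fin p → ℝ) (β : Fin p → ℝ) (i : ℕ) : Fin (p + 1) → ℝ :=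
  Fin.snoc (Z i) (Z i ⬝ᵥ β)

/-- The Gram matrix `[X,Y]ᵀ[X,Y] = Σ_{i<n} r_i r_iᵀ` of the first `n` observations. -/
noncomputable def gram {p : ℕ} (Z : ℕ → Fin p → ℝ) (β : Fin p → ℝ)
    (Θ : ℕ → Fin p → Ω → ℝ) (ε : ℕ → Ω → ℝ) (n : ℕ) (ω : Ω) :
    Matrix (Fin (p + 1)) (Fin (p + 1)) ℝ :=
  ∑ i ∈ Finset.range n, Matrix.vecMulVec (dataRow Z β Θ ε i ω) (dataRow Z β Θ ε i ω)

/-- The random vector `V_n := [X,Y]ᵀ[X,Y] [βᵀ, −1]ᵀ`. -/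
noncomputable def gramVec {p : ℕ} (Z : ℕ → Fin p → ℝ) (β : Fin p → ℝ)
    (Θ : ℕ → Fin p → Ω → ℝ) (ε : ℕ → Ω → ℝ) (n : ℕ) (ω : Ω) : Fin (p + 1) → ℝ :=
  (gram Z β Θ ε n ω).mulVec (augNegOne β)

/-- The covariance matrix `Var(V_n) = E[(V_n − E V_n)(V_n − E V_n)ᵀ]`. -/
noncomputable def covGram {p : ℕ} [MeasurableSpace Ω] (μ : Measure Ω)
    (Z : ℕ → Fin p → ℝ) (β : Fin p → ℝ) (Θ : ℕ → Fin p → Ω → ℝ) (ε : ℕ → Ω → ℝ)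
    (n : ℕ) : Matrix (Fin (p + 1)) (Fin (p + 1)) ℝ :=
  Matrix.of fun a b => ∫ ω,
    (gramVec Z β Θ ε n ω a - ∫ ω', gramVec Z β Θ ε n ω' a ∂μ) *
    (gramVec Z β Θ ε n ω b - ∫ ω', gramVec Z β Θ ε n ω' b ∂μ) ∂μ

/-- `ρ_i := tᵀ( [Z,Zβ]_{i,·}ᵀ [Θ,ε]_{i,·} + [Θ,ε]_{i,·}ᵀ [Θ,ε]_{i,·} − σ² I ) [βᵀ,−1]ᵀ`. -/
noncomputable def rho {p : ℕ} (Z : ℕ → Fin p → ℝ) (β : Fin p → ℝ)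
    (Θ : ℕ → Fin p → Ω → ℝ) (ε : ℕ → Ω → ℝ) (σ2 : ℝ) (t : Fin (p + 1) → ℝ)
    (i : ℕ) (ω : Ω) : ℝ :=
  t ⬝ᵥ ((Matrix.vecMulVec (designRow Z β i) (errRow Θ ε i ω) +
      Matrix.vecMulVec (errRow Θ ε i ω) (errRow Θ ε i ω) -
      σ2 • (1 : Matrix (Fin (p + 1)) (Fin (p + 1)) ℝ)).mulVec (augNegOne β))

lemma designRow_dot {p : ℕ} (Z : ℕ → Fin p → ℝ) (β : Fin p → ℝ) (i : ℕ) :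
    designRow Z β i ⬝ᵥ augNegOne β = 0 := by
  simp [designRow, augNegOne, dotProduct, Fin.sum_univ_castSucc]

lemma dataRow_eq {p : ℕ} (Z : ℕ → Fin p → ℝ) (β : Fin p → ℝ)
    (Θ : ℕ → Fin p → Ω → ℝ) (ε : ℕ → Ω → ℝ) (i : ℕ) (ω : Ω) :
    dataRow Z β Θ ε i ω = designRow Z β i + errRow Θ ε i ω := by
  funext a
  induction a using Fin.lastCases with
  | last => simp [dataRow, designRow, errRow]
  | cast j => simp [dataRow, designRow, errRow]

lemma dot_vecMulVec_mulVec {p : ℕ} (t w v u : Fin (p+1) → ℝ) :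
    t ⬝ᵥ (Matrix.vecMulVec w v).mulVec u = (t ⬝ᵥ w) * (v ⬝ᵥ u) := by
  simp only [mulVec, dotProduct, vecMulVec_apply]
  rw [Finset.sum_mul]
  refine Finset.sum_congr rfl fun a _ => ?_
  rw [Finset.mul_sum, Finset.mul_sum]
  exact Finset.sum_congr rfl fun b _ => by ring

lemma gramVec_apply {p : ℕ} (Z : ℕ → Fin p → ℝ) (β : Fin p → ℝ)
    (Θ : ℕ → Fin p → Ω → ℝ) (ε : ℕ → Ω → ℝ) (n : ℕ) (ω : Ω) (a : Fin (p+1)) :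
    gramVec Z β Θ ε n ω a
      = ∑ i ∈ Finset.range n,
          (designRow Z β i a + errRow Θ ε i ω a) * (errRow Θ ε i ω ⬝ᵥ augNegOne β) := by
  simp only [gramVec, gram, mulVec, dotProduct, Matrix.sum_apply, vecMulVec_apply,
    Finset.sum_mul]
  rw [Finset.sum_comm]
  refine Finset.sum_congr rfl fun i _ => ?_
  have hdu : dataRow Z β Θ ε i ω ⬝ᵥ augNegOne β = errRow Θ ε i ω ⬝ᵥ augNegOne β := by
    rw [dataRow_eq, add_dotProduct, designRow_dot, zero_add]
  have h1 : ∑ b, dataRow Z β Θ ε i ω a * dataRow Z β Θ ε i ω b * augNegOne β b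
      = dataRow Z β Θ ε i ω a * (dataRow Z β Θ ε i ω ⬝ᵥ augNegOne β) := by
    rw [dotProduct, Finset.mul_sum]
    exact Finset.sum_congr rfl fun b _ => by ring
  rw [h1, hdu, dataRow_eq]
  simp only [Pi.add_apply, dotProduct]

/-- **Variance of the linearized TLS statistic converges to a positive quadratic form.**
In the EIV model, for `t ≠ 0`,
`n⁻¹ E(Σ_{i<n} ρ_i)² = tᵀ (n⁻¹ Var([X,Y]ᵀ[X,Y][βᵀ,−1]ᵀ)) t` for every `n`; and if
`n⁻¹ Var([X,Y]ᵀ[X,Y][βᵀ,−1]ᵀ) → ℶ` with `ℶ` positive definite, then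
`n⁻¹ E(Σ_{i<n} ρ_i)² → tᵀ ℶ t > 0`. -/
theorem rho_variance_quadratic_form {p : ℕ} [MeasurableSpace Ω]
    (μ : Measure Ω) [IsProbabilityMeasure μ]
    (Z : ℕ → Fin p → ℝ) (β : Fin p → ℝ)
    (Θ : ℕ → Fin p → Ω → ℝ) (ε : ℕ → Ω → ℝ)
    (σ2 : ℝ) (hσ2 : 0 < σ2)
    (hint1 : ∀ i a, Integrable (fun ω => errRow Θ ε i ω a) μ)
    (hmean : ∀ i a, ∫ ω, errRow Θ ε i ω a ∂μ = 0)
    (hint2 : ∀ i a b, Integrable (fun ω => errRow Θ ε i ω a * errRow Θ ε i ω b) μ)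
    (hcov : ∀ i a b, ∫ ω, errRow Θ ε i ω a * errRow Θ ε i ω b ∂μ =
      if a = b then σ2 else 0)
    (hintV : ∀ n a, Integrable (fun ω => gramVec Z β Θ ε n ω a) μ)
    (hintVV : ∀ n a b, Integrable (fun ω => gramVec Z β Θ ε n ω a * gramVec Z β Θ ε n ω b) μ)
    (t : Fin (p + 1) → ℝ) (ht : t ≠ 0) :
    (∀ n : ℕ,
      (∫ ω, (∑ i ∈ Finset.range n, rho Z β Θ ε σ2 t i ω) ^ 2 ∂μ) / n =
        t ⬝ᵥ ((n : ℝ)⁻¹ • covGram μ Z β Θ ε n).mulVec t) ∧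
    (∀ B : Matrix (Fin (p + 1)) (Fin (p + 1)) ℝ, B.PosDef →
      Tendsto (fun n : ℕ => (n : ℝ)⁻¹ • covGram μ Z β Θ ε n) atTop (𝓝 B) →
      Tendsto (fun n : ℕ => (∫ ω, (∑ i ∈ Finset.range n, rho Z β Θ ε σ2 t i ω) ^ 2 ∂μ) / n)
          atTop (𝓝 (t ⬝ᵥ B.mulVec t)) ∧
        0 < t ⬝ᵥ B.mulVec t) := by

  classical
  have hu : True := trivial
  -- integrability of elementary summands
  have hIab : ∀ (i : ℕ) (a b : Fin (p + 1)) (c d : ℝ),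
      Integrable (fun ω => c * errRow Θ ε i ω b + d * (errRow Θ ε i ω a * errRow Θ ε i ω b)) μ :=
    fun i a b c d => ((hint1 i b).const_mul c).add ((hint2 i a b).const_mul d)
  have hrw : ∀ (i : ℕ) (a : Fin (p + 1)) (ω : Ω),
      (designRow Z β i a + errRow Θ ε i ω a) * (errRow Θ ε i ω ⬝ᵥ (augNegOne β))
        = ∑ b, (designRow Z β i a * (augNegOne β) b * errRow Θ ε i ω b
              + (augNegOne β) b * (errRow Θ ε i ω a * errRow Θ ε i ω b)) := by
    intro i a ω
    rw [dotProduct, add_mul, Finset.mul_sum, Finset.mul_sum, ← Finset.sum_add_distrib]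
    exact Finset.sum_congr rfl fun b _ => by ring
  have hIterm : ∀ (i : ℕ) (a : Fin (p + 1)),
      Integrable (fun ω => (designRow Z β i a + errRow Θ ε i ω a) * (errRow Θ ε i ω ⬝ᵥ (augNegOne β))) μ := by
    intro i a
    rw [show (fun ω => (designRow Z β i a + errRow Θ ε i ω a) * (errRow Θ ε i ω ⬝ᵥ (augNegOne β)))
        = fun ω => ∑ b, (designRow Z β i a * (augNegOne β) b * errRow Θ ε i ω b
              + (augNegOne β) b * (errRow Θ ε i ω a * errRow Θ ε i ω b)) from funext fun ω => hrw i a ω]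
    exact integrable_finset_sum _ fun b _ => hIab i a b _ _
  have hterm : ∀ (i : ℕ) (a : Fin (p + 1)),
      ∫ ω, (designRow Z β i a + errRow Θ ε i ω a) * (errRow Θ ε i ω ⬝ᵥ (augNegOne β)) ∂μ = σ2 * (augNegOne β) a := by
    intro i a
    rw [show (fun ω => (designRow Z β i a + errRow Θ ε i ω a) * (errRow Θ ε i ω ⬝ᵥ (augNegOne β)))
        = fun ω => ∑ b, (designRow Z β i a * (augNegOne β) b * errRow Θ ε i ω b
              + (augNegOne β) b * (errRow Θ ε i ω a * errRow Θ ε i ω b)) from funext fun ω => hrw i a ω,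
      integral_finset_sum _ fun b _ => hIab i a b _ _]
    have h1 : ∀ b : Fin (p + 1),
        ∫ ω, (designRow Z β i a * (augNegOne β) b * errRow Θ ε i ω b
              + (augNegOne β) b * (errRow Θ ε i ω a * errRow Θ ε i ω b)) ∂μ
          = (augNegOne β) b * (if a = b then σ2 else 0) := by
      intro b
      rw [integral_add ((hint1 i b).const_mul _) ((hint2 i a b).const_mul _),
        integral_const_mul, integral_const_mul, hmean, hcov]
      ring
    rw [Finset.sum_congr rfl fun b _ => h1 b]
    simp [mul_ite, mul_comm]
  -- the mean of gramVec
  have hm : ∀ (n : ℕ) (a : Fin (p + 1)),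
      (∫ ω, gramVec Z β Θ ε n ω a ∂μ) = (n : ℝ) * (σ2 * (augNegOne β) a) := by
    intro n a
    rw [show (fun ω => gramVec Z β Θ ε n ω a)
        = fun ω => ∑ i ∈ Finset.range n,
            (designRow Z β i a + errRow Θ ε i ω a) * (errRow Θ ε i ω ⬝ᵥ (augNegOne β))
        from funext fun ω => gramVec_apply Z β Θ ε n ω a,
      integral_finset_sum _ fun i _ => hIterm i a]
    simp [hterm]
  -- rho in explicit form
  have hrho : ∀ (i : ℕ) (ω : Ω), rho Z β Θ ε σ2 t i ω
      = (t ⬝ᵥ designRow Z β i + t ⬝ᵥ errRow Θ ε i ω) * (errRow Θ ε i ω ⬝ᵥ (augNegOne β))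
        - σ2 * (t ⬝ᵥ (augNegOne β)) := by
    intro i ω
    unfold rho
    rw [Matrix.sub_mulVec, Matrix.add_mulVec, dotProduct_sub, dotProduct_add,
      dot_vecMulVec_mulVec, dot_vecMulVec_mulVec]
    have hsm : t ⬝ᵥ (σ2 • (1 : Matrix (Fin (p + 1)) (Fin (p + 1)) ℝ)).mulVec (augNegOne β)
        = σ2 * (t ⬝ᵥ (augNegOne β)) := by
      rw [Matrix.smul_mulVec, Matrix.one_mulVec, dotProduct_smul, smul_eq_mul]
    rw [hsm]
    ring
  -- the key identity
  have key : ∀ n : ℕ,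
      (∫ ω, (∑ i ∈ Finset.range n, rho Z β Θ ε σ2 t i ω) ^ 2 ∂μ)
        = t ⬝ᵥ (covGram μ Z β Θ ε n).mulVec t := by
    intro n
    set m : Fin (p + 1) → ℝ := fun a => ∫ ω, gramVec Z β Θ ε n ω a ∂μ with hmdef
    have hsum : ∀ ω : Ω, (∑ i ∈ Finset.range n, rho Z β Θ ε σ2 t i ω)
        = ∑ a, t a * (gramVec Z β Θ ε n ω a - m a) := by
      intro ω
      have h1 : ∑ a, t a * (gramVec Z β Θ ε n ω a - m a)
          = (∑ a, t a * gramVec Z β Θ ε n ω a) - ∑ a, t a * m a := by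
        rw [← Finset.sum_sub_distrib]
        exact Finset.sum_congr rfl fun a _ => by ring
      have h2 : ∑ a, t a * m a = (n : ℝ) * (σ2 * (t ⬝ᵥ (augNegOne β))) := by
        have : ∀ a : Fin (p + 1), t a * m a = (n : ℝ) * (σ2 * (t a * (augNegOne β) a)) := by
          intro a; rw [hmdef]; simp only [hm n a]; ring
        rw [Finset.sum_congr rfl fun a _ => this a, ← Finset.mul_sum, ← Finset.mul_sum]
        rfl
      have h3 : ∑ a, t a * gramVec Z β Θ ε n ω a
          = ∑ i ∈ Finset.range n,
              (t ⬝ᵥ designRow Z β i + t ⬝ᵥ errRow Θ ε i ω) * (errRow Θ ε i ω ⬝ᵥ (augNegOne β)) := by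
        simp only [gramVec_apply Z β Θ ε n ω, Finset.mul_sum]
        rw [Finset.sum_comm]
        refine Finset.sum_congr rfl fun i _ => ?_
        rw [show ∑ x, t x * ((designRow Z β i x + errRow Θ ε i ω x) * (errRow Θ ε i ω ⬝ᵥ augNegOne β))
            = (∑ x, t x * (designRow Z β i x + errRow Θ ε i ω x)) * (errRow Θ ε i ω ⬝ᵥ augNegOne β)
          from by rw [Finset.sum_mul]; exact Finset.sum_congr rfl fun x _ => by ring]
        congr 1
        simp [dotProduct, mul_add, Finset.sum_add_distrib]
      rw [h1, h2, h3]
      simp only [hrho]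
      rw [Finset.sum_sub_distrib, Finset.sum_const, Finset.card_range, nsmul_eq_mul]
    have hIprod : ∀ a b : Fin (p + 1),
        Integrable (fun ω => (t a * (gramVec Z β Θ ε n ω a - m a))
            * (t b * (gramVec Z β Θ ε n ω b - m b))) μ := by
      intro a b
      rw [show (fun ω => (t a * (gramVec Z β Θ ε n ω a - m a))
            * (t b * (gramVec Z β Θ ε n ω b - m b)))
          = fun ω => (t a * t b) * (gramVec Z β Θ ε n ω a * gramVec Z β Θ ε n ω b)
              - (t a * t b * m b) * gramVec Z β Θ ε n ω a
              - (t a * t b * m a) * gramVec Z β Θ ε n ω b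
              + t a * t b * m a * m b from funext fun ω => by ring]
      exact ((((hintVV n a b).const_mul _).sub ((hintV n a).const_mul _)).sub
        ((hintV n b).const_mul _)).add (integrable_const _)
    calc (∫ ω, (∑ i ∈ Finset.range n, rho Z β Θ ε σ2 t i ω) ^ 2 ∂μ)
        = ∫ ω, ∑ a, ∑ b, (t a * (gramVec Z β Θ ε n ω a - m a))
            * (t b * (gramVec Z β Θ ε n ω b - m b)) ∂μ := by
          refine integral_congr_ae (Filter.Eventually.of_forall fun ω => ?_)
          dsimp only
          rw [hsum ω, sq, Finset.sum_mul_sum]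
      _ = ∑ a, ∑ b, ∫ ω, (t a * (gramVec Z β Θ ε n ω a - m a))
            * (t b * (gramVec Z β Θ ε n ω b - m b)) ∂μ := by
          rw [integral_finset_sum _ fun a _ => integrable_finset_sum _ fun b _ => hIprod a b]
          exact Finset.sum_congr rfl fun a _ => integral_finset_sum _ fun b _ => hIprod a b
      _ = ∑ a, ∑ b, t a * (covGram μ Z β Θ ε n a b * t b) := by
          refine Finset.sum_congr rfl fun a _ => Finset.sum_congr rfl fun b _ => ?_
          rw [show (fun ω => (t a * (gramVec Z β Θ ε n ω a - m a))
                * (t b * (gramVec Z β Θ ε n ω b - m b)))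
              = fun ω => (t a * t b) * ((gramVec Z β Θ ε n ω a - m a)
                * (gramVec Z β Θ ε n ω b - m b)) from funext fun ω => by ring,
            integral_const_mul]
          have : covGram μ Z β Θ ε n a b
              = ∫ ω, (gramVec Z β Θ ε n ω a - m a) * (gramVec Z β Θ ε n ω b - m b) ∂μ := by
            rw [hmdef]; rfl
          rw [this]; ring
      _ = t ⬝ᵥ (covGram μ Z β Θ ε n).mulVec t := by
          simp only [dotProduct, mulVec]
          exact Finset.sum_congr rfl fun a _ => by rw [Finset.mul_sum]
  have part1 : ∀ n : ℕ,
      (∫ ω, (∑ i ∈ Finset.range n, rho Z β Θ ε σ2 t i ω) ^ 2 ∂μ) / n =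
        t ⬝ᵥ ((n : ℝ)⁻¹ • covGram μ Z β Θ ε n).mulVec t := by
    intro n
    rw [key n]
    simp [Matrix.smul_mulVec, dotProduct_smul, smul_eq_mul, div_eq_inv_mul]
  refine ⟨part1, fun B hB hconv => ?_⟩
  have hpos : 0 < t ⬝ᵥ B.mulVec t := by
    have h := hB.dotProduct_mulVec_pos ht
    simpa using h
  refine ⟨?_, hpos⟩
  have hcontM : Continuous fun M : Matrix (Fin (p + 1)) (Fin (p + 1)) ℝ => t ⬝ᵥ M.mulVec t := by
    simp only [mulVec, dotProduct]
    exact continuous_finset_sum _ fun a _ => continuous_const.mul <|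
      continuous_finset_sum _ fun b _ =>
        (continuous_id.matrix_elem a b).mul continuous_const
  rw [show (fun n : ℕ => (∫ ω, (∑ i ∈ Finset.range n, rho Z β Θ ε σ2 t i ω) ^ 2 ∂μ) / n)
      = fun n : ℕ => t ⬝ᵥ ((n : ℝ)⁻¹ • covGram μ Z β Θ ε n).mulVec t
      from funext part1]
  exact (hcontM.tendsto B).comp hconv

end Stmt14
end
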